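/- Let (Y, p) be smooth on an open subset of ℝ × ℝ³, with Y ℝ³-valued and p scalar, satisfying the elastodynamic equation ∂_t²Y − ΔY = −∇p − (∇Y)^⊤(∂_t² − Δ)Y. Then for each i ∈ {1,2,3}: (∂_t² − Δ)(Ω̃ᵢY) = −(∇Ω̃ᵢY)^⊤(∂_t² − Δ)Y − (∇Y)^⊤(∂_t² − Δ)(Ω̃ᵢY) − ∇(Ωᵢ p). -/

import Mathlib

/-!
STATEMENT 18: Commutation of the elastodynamic equations with the modified
rotations Ω̃ᵢ (equation (2-2)): if ∂_t²Y − ΔY = −∇p − (∇Y)^⊤(∂_t² − Δ)Y on an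
open set, then
(∂_t² − Δ)(Ω̃ᵢY) = −(∇Ω̃ᵢY)^⊤(∂_t² − Δ)Y − (∇Y)^⊤(∂_t² − Δ)(Ω̃ᵢY) − ∇(Ωᵢ p).
-/

noncomputable section

namespace Stmt18

abbrev Pt : Type := EuclideanSpace ℝ (Fin 3)

/-- Scalar space-time functions. -/
abbrev STF : Type := ℝ → Pt → ℝ

/-- ℝ³-valued space-time functions. -/
abbrev STV : Type := ℝ → Pt → Fin 3 → ℝ

def pd (j : Fin 3) (f : Pt → ℝ) : Pt → ℝ :=
  fun x => fderiv ℝ f x (EuclideanSpace.single j 1)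

/-- Time derivative ∂_t. -/
def Dt (f : STF) : STF := fun t x => deriv (fun s => f s x) t

/-- Spatial derivative ∂_j. -/
def Dsp (j : Fin 3) (f : STF) : STF := fun t x => pd j (f t) x

/-- All space-time first derivatives ∂ = (∂_t, ∂₁, ∂₂, ∂₃). -/
def Dst : Fin 4 → STF → STF := ![Dt, Dsp 0, Dsp 1, Dsp 2]

/-- The wave operator ∂_t² − Δ. -/
def Box (f : STF) : STF := fun t x => Dt (Dt f) t x - ∑ j, Dsp j (Dsp j f) t x

/-- The rotation operators Ω = y ∧ ∇ : Ωᵢ = y_{i+1}∂_{i+2} − y_{i+2}∂_{i+1} (cyclic). -/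
def Om (i : Fin 3) (f : STF) : STF :=
  fun t x => x (i+1) * Dsp (i+2) f t x - x (i+2) * Dsp (i+1) f t x

/-- The scaling operator S = t∂_t + r∂_r = t∂_t + Σ_j y_j ∂_j. -/
def Sc (f : STF) : STF := fun t x => t * Dt f t x + ∑ j, x j * Dsp j f t x

/-- The matrices U₁, U₂, U₃. -/
def Umat : Fin 3 → Matrix (Fin 3) (Fin 3) ℝ :=
  ![!![0,0,0; 0,0,1; 0,-1,0], !![0,0,-1; 0,0,0; 1,0,0], !![0,1,0; -1,0,0; 0,0,0]]

/-- Componentwise application of a scalar operator to a vector field. -/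
def mapc (T : STF → STF) (Y : STV) : STV := fun t x i => T (fun s y => Y s y i) t x

/-- The modified rotations Ω̃ᵢY = ΩᵢY + UᵢY. -/
def OmT (i : Fin 3) (Y : STV) : STV :=
  fun t x j => Om i (fun s y => Y s y j) t x + ∑ k, Umat i j k * Y t x k

/-- The modified scaling S̃Y = (S − 1)Y. -/
def ScT (Y : STV) : STV := fun t x j => Sc (fun s y => Y s y j) t x - Y t x j

/-- The seven generators {∂_t, ∂₁, ∂₂, Ω̃₁, Ω̃₂, Ω̃₃, S̃} acting on vector fields. -/
def Gen : Fin 7 → STV → STV :=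
  ![mapc Dt, mapc (Dsp 0), mapc (Dsp 1), OmT 0, OmT 1, OmT 2, ScT]


-- ===== auxiliary machinery for the proof =====
-- ===== auxiliary machinery =====
open scoped Topology

/-- directional space-time derivative -/
def A (v : ℝ × Pt) (F : ℝ × Pt → ℝ) : ℝ × Pt → ℝ := fun q => fderiv ℝ F q v

def vt : ℝ × Pt := (1, 0)
def vs (j : Fin 3) : ℝ × Pt := (0, EuclideanSpace.single j 1)

lemma hone' : (1 : WithTop ℕ∞) ≤ ((⊤ : ℕ∞) : WithTop ℕ∞) := by
  exact_mod_cast (le_top : (1:ℕ∞) ≤ ⊤)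
lemma hsucc' : ((⊤ : ℕ∞) : WithTop ℕ∞) + 1 ≤ ((⊤ : ℕ∞) : WithTop ℕ∞) := by
  exact_mod_cast (by simp : (⊤:ℕ∞) + 1 ≤ (⊤:ℕ∞))

lemma diffAt {U : Set (ℝ × Pt)} {F : ℝ × Pt → ℝ} {q : ℝ × Pt}
    (hU : IsOpen U) (hF : ContDiffOn ℝ (⊤:ℕ∞) F U) (hq : q ∈ U) : DifferentiableAt ℝ F q :=
  (hF.contDiffAt (hU.mem_nhds hq)).differentiableAt (by simp)

lemma A_contDiffOn {U : Set (ℝ × Pt)} {F : ℝ × Pt → ℝ}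
    (hU : IsOpen U) (hF : ContDiffOn ℝ (⊤:ℕ∞) F U) (v : ℝ × Pt) :
    ContDiffOn ℝ (⊤:ℕ∞) (A v F) U := by
  have h1 : ContDiffOn ℝ (⊤:ℕ∞) (fderiv ℝ F) U := hF.fderiv_of_isOpen hU hsucc'
  exact (ContinuousLinearMap.apply ℝ ℝ v).contDiff.comp_contDiffOn h1

variable {U : Set (ℝ × Pt)} {F G G₁ G₂ : ℝ × Pt → ℝ} {q v w : ℝ × Pt}

lemma A_congr (hU : IsOpen U) (h : Set.EqOn F G U) (hq : q ∈ U) : A v F q = A v G q := by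
  unfold A
  rw [Filter.EventuallyEq.fderiv_eq (Filter.eventuallyEq_of_mem (hU.mem_nhds hq) h)]

lemma A_sym (hU : IsOpen U) (hF : ContDiffOn ℝ (⊤:ℕ∞) F U) (hq : q ∈ U) (v w : ℝ × Pt) :
    A v (A w F) q = A w (A v F) q := by
  have hF' : ContDiffOn ℝ (⊤:ℕ∞) (fderiv ℝ F) U := hF.fderiv_of_isOpen hU hsucc'
  have hd : DifferentiableAt ℝ (fderiv ℝ F) q :=
    (hF'.contDiffAt (hU.mem_nhds hq)).differentiableAt (by simp)
  have hcomp : ∀ u : ℝ × Pt, HasFDerivAt (fun q' => fderiv ℝ F q' u)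
      ((ContinuousLinearMap.apply ℝ ℝ u).comp (fderiv ℝ (fderiv ℝ F) q)) q :=
    fun u => (ContinuousLinearMap.apply ℝ ℝ u).hasFDerivAt.comp q hd.hasFDerivAt
  have hsym : ∀ v w : ℝ × Pt, fderiv ℝ (fderiv ℝ F) q v w = fderiv ℝ (fderiv ℝ F) q w v := by
    intro v w
    apply second_derivative_symmetric_of_eventually (f := F) ?_ hd.hasFDerivAt
    filter_upwards [hU.mem_nhds hq] with y hy
    exact (diffAt hU hF hy).hasFDerivAt
  calc A v (A w F) q = fderiv ℝ (fderiv ℝ F) q v w := by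
        unfold A; rw [(hcomp w).fderiv]; rfl
    _ = fderiv ℝ (fderiv ℝ F) q w v := hsym v w
    _ = A w (A v F) q := by unfold A; rw [(hcomp v).fderiv]; rfl

lemma A_add (hF : DifferentiableAt ℝ F q) (hG : DifferentiableAt ℝ G q) :
    A v (fun x => F x + G x) q = A v F q + A v G q := by
  unfold A; rw [fderiv_fun_add hF hG]; rfl

lemma A_sub (hF : DifferentiableAt ℝ F q) (hG : DifferentiableAt ℝ G q) :
    A v (fun x => F x - G x) q = A v F q - A v G q := by
  unfold A; rw [fderiv_fun_sub hF hG]; rfl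

lemma A_neg : A v (fun x => -F x) q = -A v F q := by
  unfold A; rw [fderiv_fun_neg]; rfl

lemma A_const_mul (hF : DifferentiableAt ℝ F q) (c : ℝ) :
    A v (fun x => c * F x) q = c * A v F q := by
  unfold A; rw [fderiv_const_mul hF c]; rfl

lemma A_mul (hF : DifferentiableAt ℝ F q) (hG : DifferentiableAt ℝ G q) :
    A v (fun x => F x * G x) q = F q * A v G q + G q * A v F q := by
  unfold A; rw [fderiv_fun_mul hF hG]; simp

lemma A_sum {ι : Type*} (s : Finset ι) (F : ι → (ℝ × Pt → ℝ))
    (h : ∀ k ∈ s, DifferentiableAt ℝ (F k) q) :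
    A v (fun x => ∑ k ∈ s, F k x) q = ∑ k ∈ s, A v (F k) q := by
  unfold A; rw [fderiv_fun_sum h]; simp

def coordL (a : Fin 3) : (ℝ × Pt) →L[ℝ] ℝ :=
  (EuclideanSpace.proj a).comp (ContinuousLinearMap.snd ℝ ℝ Pt)

lemma coord_diff (a : Fin 3) : DifferentiableAt ℝ (fun q' : ℝ × Pt => q'.2 a) q :=
  (coordL a).differentiableAt

lemma coord_contDiffOn (a : Fin 3) : ContDiffOn ℝ (⊤:ℕ∞) (fun q' : ℝ × Pt => q'.2 a) U :=
  (coordL a).contDiff.contDiffOn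

lemma A_coord (a : Fin 3) : A v (fun q' : ℝ × Pt => q'.2 a) q = v.2 a := by
  unfold A
  have h : (fun q' : ℝ × Pt => q'.2 a) = ⇑(coordL a) := rfl
  rw [h, ContinuousLinearMap.fderiv]; rfl

lemma A_coord_mul (hF : DifferentiableAt ℝ F q) (a : Fin 3) :
    A v (fun q' => q'.2 a * F q') q = v.2 a * F q + q.2 a * A v F q := by
  rw [A_mul (coord_diff a) hF, A_coord]; ring

-- ===== rep lemmas =====
variable {f : STF}

lemma Dt_eq (hU : IsOpen U) (h : ∀ q' ∈ U, f q'.1 q'.2 = F q')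
    (hF : ContDiffOn ℝ (⊤:ℕ∞) F U) (hq : q ∈ U) : Dt f q.1 q.2 = A vt F q := by
  obtain ⟨t, x⟩ := q
  have hc : Continuous fun s : ℝ => ((s, x) : ℝ × Pt) := by fun_prop
  have hne : {s : ℝ | ((s, x) : ℝ × Pt) ∈ U} ∈ 𝓝 t := (hU.preimage hc).mem_nhds hq
  have hev : (fun s => f s x) =ᶠ[𝓝 t] (fun s => F (s, x)) := by
    filter_upwards [hne] with s hs using h (s, x) hs
  have h1 : HasDerivAt (fun s : ℝ => ((s, x) : ℝ × Pt)) ((1:ℝ), (0:Pt)) t :=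
    (hasDerivAt_id t).prodMk (hasDerivAt_const t x)
  have hd : HasDerivAt (fun s => F (s, x)) (fderiv ℝ F (t, x) (1, 0)) t :=
    (diffAt hU hF hq).hasFDerivAt.comp_hasDerivAt t h1
  show deriv (fun s => f s x) t = _
  rw [hev.deriv_eq, hd.deriv]; rfl

lemma Dsp_eq (hU : IsOpen U) (h : ∀ q' ∈ U, f q'.1 q'.2 = F q')
    (hF : ContDiffOn ℝ (⊤:ℕ∞) F U) (hq : q ∈ U) (j : Fin 3) :
    Dsp j f q.1 q.2 = A (vs j) F q := by
  obtain ⟨t, x⟩ := q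
  have hc : Continuous fun y : Pt => ((t, y) : ℝ × Pt) := by fun_prop
  have hne : {y : Pt | ((t, y) : ℝ × Pt) ∈ U} ∈ 𝓝 x := (hU.preimage hc).mem_nhds hq
  have hev : (f t) =ᶠ[𝓝 x] (fun y => F (t, y)) := by
    filter_upwards [hne] with y hy using h (t, y) hy
  have h1 : HasFDerivAt (fun y : Pt => ((t, y) : ℝ × Pt))
      ((0 : Pt →L[ℝ] ℝ).prod (ContinuousLinearMap.id ℝ Pt)) x :=
    (hasFDerivAt_const t x).prodMk (hasFDerivAt_id x)
  have hd : HasFDerivAt (fun y : Pt => F (t, y))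
      ((fderiv ℝ F (t, x)).comp ((0 : Pt →L[ℝ] ℝ).prod (ContinuousLinearMap.id ℝ Pt))) x :=
    (diffAt hU hF hq).hasFDerivAt.comp x h1
  show pd j (f t) x = _
  unfold pd
  rw [hev.fderiv_eq, hd.fderiv]
  rfl

def BoxA (F : ℝ × Pt → ℝ) : ℝ × Pt → ℝ :=
  fun q => A vt (A vt F) q - ∑ j : Fin 3, A (vs j) (A (vs j) F) q

def OmA (i : Fin 3) (F : ℝ × Pt → ℝ) : ℝ × Pt → ℝ :=
  fun q => q.2 (i+1) * A (vs (i+2)) F q - q.2 (i+2) * A (vs (i+1)) F q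

lemma Box_eq (hU : IsOpen U) (h : ∀ q' ∈ U, f q'.1 q'.2 = F q')
    (hF : ContDiffOn ℝ (⊤:ℕ∞) F U) (hq : q ∈ U) : Box f q.1 q.2 = BoxA F q := by
  have hDt : ∀ q' ∈ U, Dt f q'.1 q'.2 = A vt F q' := fun q' hq' => Dt_eq hU h hF hq'
  have hDs : ∀ j : Fin 3, ∀ q' ∈ U, Dsp j f q'.1 q'.2 = A (vs j) F q' :=
    fun j q' hq' => Dsp_eq hU h hF hq' j
  show Dt (Dt f) q.1 q.2 - ∑ j : Fin 3, Dsp j (Dsp j f) q.1 q.2 = _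
  rw [Dt_eq hU hDt (A_contDiffOn hU hF vt) hq,
    Finset.sum_congr rfl fun j _ => Dsp_eq hU (hDs j) (A_contDiffOn hU hF (vs j)) hq j]
  rfl

lemma Om_eq (hU : IsOpen U) (h : ∀ q' ∈ U, f q'.1 q'.2 = F q')
    (hF : ContDiffOn ℝ (⊤:ℕ∞) F U) (hq : q ∈ U) (i : Fin 3) :
    Om i f q.1 q.2 = OmA i F q := by
  show q.2 (i+1) * Dsp (i+2) f q.1 q.2 - q.2 (i+2) * Dsp (i+1) f q.1 q.2 = _
  rw [Dsp_eq hU h hF hq (i+2), Dsp_eq hU h hF hq (i+1)]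
  rfl

lemma OmA_contDiffOn (hU : IsOpen U) (hF : ContDiffOn ℝ (⊤:ℕ∞) F U) (i : Fin 3) :
    ContDiffOn ℝ (⊤:ℕ∞) (OmA i F) U :=
  ((coord_contDiffOn _).mul (A_contDiffOn hU hF _)).sub
    ((coord_contDiffOn _).mul (A_contDiffOn hU hF _))

lemma BoxA_contDiffOn (hU : IsOpen U) (hF : ContDiffOn ℝ (⊤:ℕ∞) F U) :
    ContDiffOn ℝ (⊤:ℕ∞) (BoxA F) U :=
  (A_contDiffOn hU (A_contDiffOn hU hF vt) vt).sub
    (ContDiffOn.sum fun j _ => A_contDiffOn hU (A_contDiffOn hU hF (vs j)) (vs j))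

lemma CommA (hU : IsOpen U) (hF : ContDiffOn ℝ (⊤:ℕ∞) F U) (hq : q ∈ U) (i : Fin 3)
    (v : ℝ × Pt) :
    A v (OmA i F) q = OmA i (A v F) q
      + v.2 (i+1) * A (vs (i+2)) F q - v.2 (i+2) * A (vs (i+1)) F q := by
  have db : DifferentiableAt ℝ (A (vs (i+2)) F) q := diffAt hU (A_contDiffOn hU hF _) hq
  have da : DifferentiableAt ℝ (A (vs (i+1)) F) q := diffAt hU (A_contDiffOn hU hF _) hq
  have d1 : DifferentiableAt ℝ (fun q' => q'.2 (i+1) * A (vs (i+2)) F q') q :=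
    (coord_diff _).mul db
  have d2 : DifferentiableAt ℝ (fun q' => q'.2 (i+2) * A (vs (i+1)) F q') q :=
    (coord_diff _).mul da
  show A v (fun q' => q'.2 (i+1) * A (vs (i+2)) F q' - q'.2 (i+2) * A (vs (i+1)) F q') q = _
  rw [A_sub d1 d2, A_coord_mul db (i+1), A_coord_mul da (i+2),
    A_sym hU hF hq v (vs (i+2)), A_sym hU hF hq v (vs (i+1))]
  show _ = q.2 (i+1) * A (vs (i+2)) (A v F) q - q.2 (i+2) * A (vs (i+1)) (A v F) q
    + v.2 (i+1) * A (vs (i+2)) F q - v.2 (i+2) * A (vs (i+1)) F q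
  ring

lemma OmA_congr (hU : IsOpen U) (h : Set.EqOn F G U) (hq : q ∈ U) (i : Fin 3) :
    OmA i F q = OmA i G q := by
  unfold OmA; rw [A_congr hU h hq, A_congr hU h hq]

lemma OmA_neg (i : Fin 3) : OmA i (fun x => -F x) q = -OmA i F q := by
  unfold OmA; rw [A_neg, A_neg]; ring

lemma OmA_sub (h1 : DifferentiableAt ℝ F q) (h2 : DifferentiableAt ℝ G q) (i : Fin 3) :
    OmA i (fun x => F x - G x) q = OmA i F q - OmA i G q := by
  unfold OmA; rw [A_sub h1 h2, A_sub h1 h2]; ring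

lemma OmA_mul (h1 : DifferentiableAt ℝ F q) (h2 : DifferentiableAt ℝ G q) (i : Fin 3) :
    OmA i (fun x => F x * G x) q = F q * OmA i G q + G q * OmA i F q := by
  unfold OmA; rw [A_mul h1 h2, A_mul h1 h2]; ring

lemma OmA_sum {ι : Type*} (s : Finset ι) (F : ι → (ℝ × Pt → ℝ))
    (h : ∀ k ∈ s, DifferentiableAt ℝ (F k) q) (i : Fin 3) :
    OmA i (fun x => ∑ k ∈ s, F k x) q = ∑ k ∈ s, OmA i (F k) q := by
  unfold OmA; rw [A_sum s F h, A_sum s F h, Finset.mul_sum, Finset.mul_sum,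
    ← Finset.sum_sub_distrib]

lemma delta_sum (a : Fin 3) (g : Fin 3 → ℝ) : (∑ j : Fin 3, (vs j).2 a * g j) = g a := by
  fin_cases a <;>
    simp [vs, Fin.sum_univ_three, EuclideanSpace.single_apply]
-- ===== second-order lemmas for BoxA =====
lemma BoxA_add (hU : IsOpen U) (h1 : ContDiffOn ℝ (⊤:ℕ∞) F U)
    (h2 : ContDiffOn ℝ (⊤:ℕ∞) G U) (hq : q ∈ U) :
    BoxA (fun x => F x + G x) q = BoxA F q + BoxA G q := by
  have key : ∀ w : ℝ × Pt, A w (A w (fun x => F x + G x)) q = A w (A w F) q + A w (A w G) q := by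
    intro w
    have e : Set.EqOn (A w fun x => F x + G x) (fun x => A w F x + A w G x) U :=
      fun q' hq' => A_add (diffAt hU h1 hq') (diffAt hU h2 hq')
    rw [A_congr hU e hq,
      A_add (diffAt hU (A_contDiffOn hU h1 w) hq) (diffAt hU (A_contDiffOn hU h2 w) hq)]
  unfold BoxA
  rw [key vt, Finset.sum_congr rfl fun j _ => key (vs j), Finset.sum_add_distrib]
  ring

lemma BoxA_const_mul (hU : IsOpen U) (h1 : ContDiffOn ℝ (⊤:ℕ∞) F U) (hq : q ∈ U) (c : ℝ) :
    BoxA (fun x => c * F x) q = c * BoxA F q := by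
  have key : ∀ w : ℝ × Pt, A w (A w (fun x => c * F x)) q = c * A w (A w F) q := by
    intro w
    have e : Set.EqOn (A w fun x => c * F x) (fun x => c * A w F x) U :=
      fun q' hq' => A_const_mul (diffAt hU h1 hq') c
    rw [A_congr hU e hq, A_const_mul (diffAt hU (A_contDiffOn hU h1 w) hq) c]
  unfold BoxA
  rw [key vt, Finset.sum_congr rfl fun j _ => key (vs j), ← Finset.mul_sum]
  ring

lemma BoxA_sum {ι : Type*} (hU : IsOpen U) (s : Finset ι) (F : ι → (ℝ × Pt → ℝ))
    (h : ∀ k ∈ s, ContDiffOn ℝ (⊤:ℕ∞) (F k) U) (hq : q ∈ U) :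
    BoxA (fun x => ∑ k ∈ s, F k x) q = ∑ k ∈ s, BoxA (F k) q := by
  have key : ∀ w : ℝ × Pt,
      A w (A w (fun x => ∑ k ∈ s, F k x)) q = ∑ k ∈ s, A w (A w (F k)) q := by
    intro w
    have e : Set.EqOn (A w fun x => ∑ k ∈ s, F k x) (fun x => ∑ k ∈ s, A w (F k) x) U :=
      fun q' hq' => A_sum s F (fun k hk => diffAt hU (h k hk) hq')
    rw [A_congr hU e hq, A_sum s _ (fun k hk => diffAt hU (A_contDiffOn hU (h k hk) w) hq)]
  unfold BoxA
  rw [key vt, Finset.sum_congr rfl fun j _ => key (vs j), Finset.sum_comm,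
    ← Finset.sum_sub_distrib]

-- ===== the key commutation: [Box, Ω] = 0 =====
lemma BoxOm (hU : IsOpen U) (hF : ContDiffOn ℝ (⊤:ℕ∞) F U) (hq : q ∈ U) (i : Fin 3) :
    BoxA (OmA i F) q = OmA i (BoxA F) q := by
  have hAv : ∀ v : ℝ × Pt, ContDiffOn ℝ (⊤:ℕ∞) (A v F) U := fun v => A_contDiffOn hU hF v
  have t_in : Set.EqOn (A vt (OmA i F)) (OmA i (A vt F)) U := by
    intro q' hq'
    rw [CommA hU hF hq' i vt]
    show _ + (0:Pt) (i+1) * _ - (0:Pt) (i+2) * _ = _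
    simp
  have t_term : A vt (A vt (OmA i F)) q = OmA i (A vt (A vt F)) q := by
    rw [A_congr hU t_in hq, CommA hU (hAv vt) hq i vt]
    show _ + (0:Pt) (i+1) * _ - (0:Pt) (i+2) * _ = _
    simp
  have s_term : ∀ j : Fin 3, A (vs j) (A (vs j) (OmA i F)) q
      = OmA i (A (vs j) (A (vs j) F)) q
        + (vs j).2 (i+1) * A (vs (i+2)) (A (vs j) F) q
        - (vs j).2 (i+2) * A (vs (i+1)) (A (vs j) F) q
        + (vs j).2 (i+1) * A (vs j) (A (vs (i+2)) F) q
        - (vs j).2 (i+2) * A (vs j) (A (vs (i+1)) F) q := by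
    intro j
    have e : Set.EqOn (A (vs j) (OmA i F))
        (fun q' => OmA i (A (vs j) F) q' + (vs j).2 (i+1) * A (vs (i+2)) F q'
          - (vs j).2 (i+2) * A (vs (i+1)) F q') U := fun q' hq' => CommA hU hF hq' i (vs j)
    have dO : DifferentiableAt ℝ (OmA i (A (vs j) F)) q :=
      diffAt hU (OmA_contDiffOn hU (hAv _) i) hq
    have db : DifferentiableAt ℝ (A (vs (i+2)) F) q := diffAt hU (hAv _) hq
    have da : DifferentiableAt ℝ (A (vs (i+1)) F) q := diffAt hU (hAv _) hq
    rw [A_congr hU e hq, A_sub (dO.fun_add (db.const_mul _)) (da.const_mul _),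
      A_add dO (db.const_mul _), A_const_mul db _, A_const_mul da _,
      CommA hU (hAv (vs j)) hq i (vs j)]
  have sum_s : ∑ j : Fin 3, A (vs j) (A (vs j) (OmA i F)) q
      = ∑ j : Fin 3, OmA i (A (vs j) (A (vs j) F)) q := by
    rw [Finset.sum_congr rfl fun j _ => s_term j]
    have expand : ∀ j : Fin 3, OmA i (A (vs j) (A (vs j) F)) q
        + (vs j).2 (i+1) * A (vs (i+2)) (A (vs j) F) q
        - (vs j).2 (i+2) * A (vs (i+1)) (A (vs j) F) q
        + (vs j).2 (i+1) * A (vs j) (A (vs (i+2)) F) q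
        - (vs j).2 (i+2) * A (vs j) (A (vs (i+1)) F) q
        = OmA i (A (vs j) (A (vs j) F)) q
          + ((vs j).2 (i+1) * A (vs (i+2)) (A (vs j) F) q
            + (vs j).2 (i+1) * A (vs j) (A (vs (i+2)) F) q)
          - ((vs j).2 (i+2) * A (vs (i+1)) (A (vs j) F) q
            + (vs j).2 (i+2) * A (vs j) (A (vs (i+1)) F) q) := fun j => by ring
    rw [Finset.sum_congr rfl fun j _ => expand j, Finset.sum_sub_distrib,
      Finset.sum_add_distrib, Finset.sum_add_distrib, Finset.sum_add_distrib,
      delta_sum (i+1) (fun j => A (vs (i+2)) (A (vs j) F) q),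
      delta_sum (i+1) (fun j => A (vs j) (A (vs (i+2)) F) q),
      delta_sum (i+2) (fun j => A (vs (i+1)) (A (vs j) F) q),
      delta_sum (i+2) (fun j => A (vs j) (A (vs (i+1)) F) q)]
    ring
  have expandB : ∀ c : Fin 3, A (vs c) (BoxA F) q
      = A (vs c) (A vt (A vt F)) q - ∑ j : Fin 3, A (vs c) (A (vs j) (A (vs j) F)) q := by
    intro c
    have d1 : DifferentiableAt ℝ (A vt (A vt F)) q :=
      diffAt hU (A_contDiffOn hU (hAv vt) vt) hq
    have dj : ∀ j : Fin 3, DifferentiableAt ℝ (A (vs j) (A (vs j) F)) q :=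
      fun j => diffAt hU (A_contDiffOn hU (hAv (vs j)) (vs j)) hq
    have dsum : DifferentiableAt ℝ (fun x => ∑ j : Fin 3, A (vs j) (A (vs j) F) x) q :=
      DifferentiableAt.fun_sum fun j _ => dj j
    show A (vs c) (fun x => A vt (A vt F) x - ∑ j : Fin 3, A (vs j) (A (vs j) F) x) q = _
    rw [A_sub d1 dsum, A_sum _ _ (fun j _ => dj j)]
  show A vt (A vt (OmA i F)) q - ∑ j : Fin 3, A (vs j) (A (vs j) (OmA i F)) q = _
  rw [t_term, sum_s]
  show _ = q.2 (i+1) * A (vs (i+2)) (BoxA F) q - q.2 (i+2) * A (vs (i+1)) (BoxA F) q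
  rw [expandB (i+2), expandB (i+1)]
  unfold OmA
  rw [Finset.sum_sub_distrib]
  simp only [mul_sub, Finset.mul_sum]
  ring

-- ===== the U-matrix combinatorics =====
lemma Urow (i j : Fin 3) (B : Fin 3 → ℝ) :
    ∑ k : Fin 3, Umat i j k * B k
      = (vs j).2 (i+1) * B (i+2) - (vs j).2 (i+2) * B (i+1) := by
  fin_cases i <;> fin_cases j <;>
    simp [Umat, vs, Fin.sum_univ_three, EuclideanSpace.single_apply] <;> ring

lemma Uskew (i : Fin 3) (g : Fin 3 → Fin 3 → ℝ) :
    ∑ k : Fin 3, ∑ m : Fin 3, Umat i k m * (g m k + g k m) = 0 := by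
  fin_cases i <;> simp [Umat, Fin.sum_univ_three, Matrix.vecHead, Matrix.vecTail] <;> ring

-- ===== main theorem =====
def FF (Y : STV) (k : Fin 3) : ℝ × Pt → ℝ := fun q' => Y q'.1 q'.2 k
def PP (p : STF) : ℝ × Pt → ℝ := fun q' => p q'.1 q'.2
def HH (i : Fin 3) (Y : STV) (k : Fin 3) : ℝ × Pt → ℝ :=
  fun q' => OmA i (FF Y k) q' + ∑ m : Fin 3, Umat i k m * FF Y m q'

theorem rotation_commutation
    (Uset : Set (ℝ × Pt)) (hU : IsOpen Uset)
    (Y : STV) (p : STF)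
    (hY : ∀ i, ContDiffOn ℝ (⊤ : ℕ∞) (fun q : ℝ × Pt => Y q.1 q.2 i) Uset)
    (hp : ContDiffOn ℝ (⊤ : ℕ∞) (fun q : ℝ × Pt => p q.1 q.2) Uset)
    (heq : ∀ q ∈ Uset, ∀ i : Fin 3,
      Box (fun s y => Y s y i) q.1 q.2 =
        - Dsp i p q.1 q.2
          - ∑ k, Dsp i (fun s y => Y s y k) q.1 q.2 * Box (fun s y => Y s y k) q.1 q.2) :
    ∀ q ∈ Uset, ∀ (i j : Fin 3),
      Box (fun s y => OmT i Y s y j) q.1 q.2 =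
        - (∑ k, Dsp j (fun s y => OmT i Y s y k) q.1 q.2
              * Box (fun s y => Y s y k) q.1 q.2)
          - (∑ k, Dsp j (fun s y => Y s y k) q.1 q.2
              * Box (fun s y => OmT i Y s y k) q.1 q.2)
          - Dsp j (Om i p) q.1 q.2 := by
  intro q hq i j
  have hFc : ∀ k, ContDiffOn ℝ (⊤:ℕ∞) (FF Y k) Uset := fun k => hY k
  have hPc : ContDiffOn ℝ (⊤:ℕ∞) (PP p) Uset := hp
  have hHc : ∀ k, ContDiffOn ℝ (⊤:ℕ∞) (HH i Y k) Uset := fun k =>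
    (OmA_contDiffOn hU (hFc k) i).add (ContDiffOn.sum fun m _ => contDiffOn_const.mul (hFc m))
  have hOmT : ∀ k, ∀ q' ∈ Uset, OmT i Y q'.1 q'.2 k = HH i Y k q' := by
    intro k q' hq'
    show Om i (fun s y => Y s y k) q'.1 q'.2 + ∑ m : Fin 3, Umat i k m * Y q'.1 q'.2 m = _
    rw [Om_eq hU (fun _ _ => rfl) (hFc k) hq' i]
    rfl
  have fBoxY : ∀ q' ∈ Uset, ∀ k, Box (fun s y => Y s y k) q'.1 q'.2 = BoxA (FF Y k) q' :=
    fun q' hq' k => Box_eq hU (fun _ _ => rfl) (hFc k) hq'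
  have fDspY : ∀ q' ∈ Uset, ∀ (c k : Fin 3),
      Dsp c (fun s y => Y s y k) q'.1 q'.2 = A (vs c) (FF Y k) q' :=
    fun q' hq' c k => Dsp_eq hU (fun _ _ => rfl) (hFc k) hq' c
  have fBoxH : ∀ k, Box (fun s y => OmT i Y s y k) q.1 q.2 = BoxA (HH i Y k) q :=
    fun k => Box_eq hU (hOmT k) (hHc k) hq
  have fDspH : ∀ k, Dsp j (fun s y => OmT i Y s y k) q.1 q.2 = A (vs j) (HH i Y k) q :=
    fun k => Dsp_eq hU (hOmT k) (hHc k) hq j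
  have fOmp : Dsp j (Om i p) q.1 q.2 = A (vs j) (OmA i (PP p)) q :=
    Dsp_eq hU (fun q' hq' => Om_eq hU (fun _ _ => rfl) hPc hq' i) (OmA_contDiffOn hU hPc i) hq j
  have hEA : ∀ q' ∈ Uset, ∀ k, BoxA (FF Y k) q'
      = -A (vs k) (PP p) q' - ∑ m : Fin 3, A (vs k) (FF Y m) q' * BoxA (FF Y m) q' := by
    intro q' hq' k
    have h0 := heq q' hq' k
    rw [fBoxY q' hq' k, Dsp_eq hU (fun _ _ => rfl) hPc hq' k,
      Finset.sum_congr rfl (fun m _ => by rw [fDspY q' hq' k m, fBoxY q' hq' m])] at h0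
    exact h0
  -- rewrite the goal into A-land
  have e1 : (∑ k, Dsp j (fun s y => OmT i Y s y k) q.1 q.2
        * Box (fun s y => Y s y k) q.1 q.2)
      = ∑ k : Fin 3, A (vs j) (HH i Y k) q * BoxA (FF Y k) q :=
    Finset.sum_congr rfl fun k _ => by rw [fDspH k, fBoxY q hq k]
  have e2 : (∑ k, Dsp j (fun s y => Y s y k) q.1 q.2
        * Box (fun s y => OmT i Y s y k) q.1 q.2)
      = ∑ k : Fin 3, A (vs j) (FF Y k) q * BoxA (HH i Y k) q :=
    Finset.sum_congr rfl fun k _ => by rw [fDspY q hq j k, fBoxH k]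
  rw [fBoxH j, e1, e2, fOmp]
  -- key computation lemmas
  have g1 : ∀ k, BoxA (HH i Y k) q
      = OmA i (BoxA (FF Y k)) q + ∑ m : Fin 3, Umat i k m * BoxA (FF Y m) q := by
    intro k
    unfold HH
    rw [BoxA_add hU (OmA_contDiffOn hU (hFc k) i)
        (ContDiffOn.sum fun m _ => contDiffOn_const.mul (hFc m)) hq,
      BoxOm hU (hFc k) hq i,
      BoxA_sum hU Finset.univ _ (fun m _ => contDiffOn_const.mul (hFc m)) hq,
      Finset.sum_congr rfl fun m _ => BoxA_const_mul hU (hFc m) hq (Umat i k m)]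
  have g2 : ∀ k, A (vs j) (HH i Y k) q
      = OmA i (A (vs j) (FF Y k)) q
        + (vs j).2 (i+1) * A (vs (i+2)) (FF Y k) q
        - (vs j).2 (i+2) * A (vs (i+1)) (FF Y k) q
        + ∑ m : Fin 3, Umat i k m * A (vs j) (FF Y m) q := by
    intro k
    unfold HH
    rw [A_add (diffAt hU (OmA_contDiffOn hU (hFc k) i) hq)
        (DifferentiableAt.fun_sum fun m _ => (diffAt hU (hFc m) hq).const_mul _),
      A_sum Finset.univ _ (fun m _ => (diffAt hU (hFc m) hq).const_mul _),
      Finset.sum_congr rfl fun m _ => A_const_mul (diffAt hU (hFc m) hq) (Umat i k m),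
      CommA hU (hFc k) hq i (vs j)]
  have hEqOn : Set.EqOn (BoxA (FF Y j))
      (fun q' => -A (vs j) (PP p) q'
        - ∑ m : Fin 3, A (vs j) (FF Y m) q' * BoxA (FF Y m) q') Uset :=
    fun q' hq' => hEA q' hq' j
  have dP : DifferentiableAt ℝ (A (vs j) (PP p)) q := diffAt hU (A_contDiffOn hU hPc _) hq
  have dFm : ∀ m, DifferentiableAt ℝ (A (vs j) (FF Y m)) q :=
    fun m => diffAt hU (A_contDiffOn hU (hFc m) _) hq
  have dBm : ∀ m, DifferentiableAt ℝ (BoxA (FF Y m)) q :=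
    fun m => diffAt hU (BoxA_contDiffOn hU (hFc m)) hq
  have g3 : OmA i (BoxA (FF Y j)) q
      = -A (vs j) (OmA i (PP p)) q
        + (vs j).2 (i+1) * A (vs (i+2)) (PP p) q
        - (vs j).2 (i+2) * A (vs (i+1)) (PP p) q
        - ∑ m : Fin 3, (A (vs j) (FF Y m) q * OmA i (BoxA (FF Y m)) q
            + BoxA (FF Y m) q * OmA i (A (vs j) (FF Y m)) q) := by
    rw [OmA_congr hU hEqOn hq i,
      OmA_sub dP.fun_neg (DifferentiableAt.fun_sum fun m _ => (dFm m).fun_mul (dBm m)) i,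
      OmA_neg i,
      OmA_sum Finset.univ _ (fun m _ => (dFm m).fun_mul (dBm m)) i,
      Finset.sum_congr rfl fun m _ => OmA_mul (dFm m) (dBm m) i]
    have hc := CommA hU hPc hq i (vs j)
    linear_combination hc
  have hEa := hEA q hq (i+1)
  have hEb := hEA q hq (i+2)
  have hrow := Urow i j (fun k => BoxA (FF Y k) q)
  have hskew := Uskew i (fun k m => A (vs j) (FF Y k) q * BoxA (FF Y m) q)
  have e3 : (∑ k : Fin 3, A (vs j) (HH i Y k) q * BoxA (FF Y k) q)
      = ∑ k : Fin 3, (OmA i (A (vs j) (FF Y k)) q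
        + (vs j).2 (i+1) * A (vs (i+2)) (FF Y k) q
        - (vs j).2 (i+2) * A (vs (i+1)) (FF Y k) q
        + ∑ m : Fin 3, Umat i k m * A (vs j) (FF Y m) q) * BoxA (FF Y k) q :=
    Finset.sum_congr rfl fun k _ => by rw [g2 k]
  have e4 : (∑ k : Fin 3, A (vs j) (FF Y k) q * BoxA (HH i Y k) q)
      = ∑ k : Fin 3, A (vs j) (FF Y k) q * (OmA i (BoxA (FF Y k)) q
        + ∑ m : Fin 3, Umat i k m * BoxA (FF Y m) q) :=
    Finset.sum_congr rfl fun k _ => by rw [g1 k]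
  rw [g1 j, g3, e3, e4]
  simp only [Fin.sum_univ_three] at hrow hskew hEa hEb ⊢
  linear_combination hrow + (vs j).2 (i+1) * hEb - (vs j).2 (i+2) * hEa + hskew

end Stmt18
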